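/- Let N_1, …, N_n (n ≥ 2) be i.i.d. real Gaussian random variables with mean 0 and variance σ² > 0, fix an index i ∈ {1, …, n}, and let t > 0. Then P( Σ_{l=1}^n |N_i − N_l| ≥ n·t ) ≤ 2^n · exp( −n t² / (2σ²(n−1)) ). -/

import Mathlib

open MeasureTheory ProbabilityTheory
open scoped BigOperators NNReal ENNReal

section Aux

lemma gauss_pdf_shift {v : ℝ≥0} (hv : v ≠ 0) (s x : ℝ) :
    Real.exp (s * x) * ProbabilityTheory.gaussianPDFReal 0 v x
      = Real.exp (s ^ 2 * v / 2) * ProbabilityTheory.gaussianPDFReal (s * v) v x := by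
  have hv' : (v : ℝ) ≠ 0 := by exact_mod_cast hv
  simp only [ProbabilityTheory.gaussianPDFReal, sub_zero]
  rw [mul_left_comm, ← Real.exp_add, mul_left_comm, ← Real.exp_add]
  congr 2
  field_simp
  ring

lemma integrable_exp_gaussianReal {v : ℝ≥0} (hv : v ≠ 0) (s : ℝ) :
    Integrable (fun x => Real.exp (s * x)) (gaussianReal 0 v) := by
  rw [ProbabilityTheory.gaussianReal_of_var_ne_zero _ hv]
  have hm : Measurable fun x => (ProbabilityTheory.gaussianPDFReal 0 v x).toNNReal :=
    (ProbabilityTheory.measurable_gaussianPDFReal 0 v).real_toNNReal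
  have hpdf : ProbabilityTheory.gaussianPDF 0 v
      = fun x => ((ProbabilityTheory.gaussianPDFReal 0 v x).toNNReal : ℝ≥0∞) := rfl
  rw [hpdf, integrable_withDensity_iff_integrable_smul hm]
  have : (fun x => (ProbabilityTheory.gaussianPDFReal 0 v x).toNNReal • Real.exp (s * x))
      = fun x => Real.exp (s ^ 2 * v / 2) * ProbabilityTheory.gaussianPDFReal (s * v) v x := by
    funext x
    rw [NNReal.smul_def, Real.coe_toNNReal _ (ProbabilityTheory.gaussianPDFReal_nonneg 0 v x),
      smul_eq_mul, mul_comm (ProbabilityTheory.gaussianPDFReal 0 v x)]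
    exact gauss_pdf_shift hv s x
  rw [this]
  exact (ProbabilityTheory.integrable_gaussianPDFReal (s * v) v).const_mul _

lemma integral_exp_gaussianReal {v : ℝ≥0} (hv : v ≠ 0) (s : ℝ) :
    ∫ x, Real.exp (s * x) ∂(gaussianReal 0 v) = Real.exp (s ^ 2 * v / 2) := by
  rw [ProbabilityTheory.gaussianReal_of_var_ne_zero _ hv]
  have hm : Measurable fun x => (ProbabilityTheory.gaussianPDFReal 0 v x).toNNReal :=
    (ProbabilityTheory.measurable_gaussianPDFReal 0 v).real_toNNReal
  have hpdf : ProbabilityTheory.gaussianPDF 0 v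
      = fun x => ((ProbabilityTheory.gaussianPDFReal 0 v x).toNNReal : ℝ≥0∞) := rfl
  rw [hpdf, integral_withDensity_eq_integral_smul hm]
  have : (fun x => (ProbabilityTheory.gaussianPDFReal 0 v x).toNNReal • Real.exp (s * x))
      = fun x => Real.exp (s ^ 2 * v / 2) * ProbabilityTheory.gaussianPDFReal (s * v) v x := by
    funext x
    rw [NNReal.smul_def, Real.coe_toNNReal _ (ProbabilityTheory.gaussianPDFReal_nonneg 0 v x),
      smul_eq_mul, mul_comm (ProbabilityTheory.gaussianPDFReal 0 v x)]
    exact gauss_pdf_shift hv s x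
  rw [this, integral_const_mul, ProbabilityTheory.integral_gaussianPDFReal_eq_one (s * v) hv,
    mul_one]

variable {Ω : Type*} [MeasurableSpace Ω] {P : Measure Ω} {v : ℝ≥0} {X : Ω → ℝ}

lemma integrable_exp_mul_of_gauss (hv : v ≠ 0) (hX : Measurable X)
    (hd : Measure.map X P = gaussianReal 0 v) (s : ℝ) :
    Integrable (fun ω => Real.exp (s * X ω)) P := by
  have hgm : Measurable fun x : ℝ => Real.exp (s * x) := by fun_prop
  have h := (integrable_map_measure
      (g := fun x => Real.exp (s * x))
      (hgm.aestronglyMeasurable)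
      hX.aemeasurable).mp (by rw [hd]; exact integrable_exp_gaussianReal hv s)
  exact h

lemma integral_exp_mul_of_gauss (hv : v ≠ 0) (hX : Measurable X)
    (hd : Measure.map X P = gaussianReal 0 v) (s : ℝ) :
    ∫ ω, Real.exp (s * X ω) ∂P = Real.exp (s ^ 2 * v / 2) := by
  have hgm : Measurable fun x : ℝ => Real.exp (s * x) := by fun_prop
  rw [← integral_exp_gaussianReal hv s, ← hd,
    integral_map hX.aemeasurable hgm.aestronglyMeasurable]

lemma exp_abs_le (s x : ℝ) :
    Real.exp (s * |x|) ≤ Real.exp (s * x) + Real.exp (-s * x) := by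
  rcases abs_cases x with ⟨h, _⟩ | ⟨h, _⟩
  · rw [h]; have := Real.exp_pos (-s * x); linarith
  · rw [h, mul_neg, ← neg_mul]; have := Real.exp_pos (s * x); linarith

lemma integrable_exp_abs_of_gauss (hv : v ≠ 0) (hX : Measurable X)
    (hd : Measure.map X P = gaussianReal 0 v) (s : ℝ) :
    Integrable (fun ω => Real.exp (s * |X ω|)) P := by
  refine Integrable.mono' ((integrable_exp_mul_of_gauss hv hX hd s).add
    (integrable_exp_mul_of_gauss hv hX hd (-s)))
    ((hX.abs.const_mul s).exp.aestronglyMeasurable) ?_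
  filter_upwards with ω
  rw [Real.norm_eq_abs, Real.abs_exp]
  exact exp_abs_le s (X ω)

lemma integral_exp_abs_of_gauss [IsProbabilityMeasure P] (hv : v ≠ 0) (hX : Measurable X)
    (hd : Measure.map X P = gaussianReal 0 v) (s : ℝ) :
    ∫ ω, Real.exp (s * |X ω|) ∂P ≤ 2 * Real.exp (s ^ 2 * v / 2) := by
  have h1 := integrable_exp_mul_of_gauss hv hX hd s
  have h2 := integrable_exp_mul_of_gauss hv hX hd (-s)
  calc ∫ ω, Real.exp (s * |X ω|) ∂P
      ≤ ∫ ω, (Real.exp (s * X ω) + Real.exp (-s * X ω)) ∂P :=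
        integral_mono (integrable_exp_abs_of_gauss hv hX hd s) (h1.add h2)
          (fun ω => exp_abs_le s (X ω))
    _ = Real.exp (s ^ 2 * v / 2) + Real.exp ((-s) ^ 2 * v / 2) := by
        rw [integral_add h1 h2, integral_exp_mul_of_gauss hv hX hd s,
          integral_exp_mul_of_gauss hv hX hd (-s)]
    _ = 2 * Real.exp (s ^ 2 * v / 2) := by rw [neg_sq]; ring

end Aux

/-- Tail bound for `∑_l |N_i - N_l|` for i.i.d. centered Gaussians with variance `σ²`:
`P(∑_l |N_i - N_l| ≥ n t) ≤ 2^n exp(-n t² / (2 σ² (n-1)))`. -/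
theorem tail_bound_sum_abs_gaussian_diff {Ω : Type*} [MeasurableSpace Ω]
    (P : Measure Ω) [IsProbabilityMeasure P]
    (n : ℕ) (hn : 2 ≤ n) (N : Fin n → Ω → ℝ) (σ : ℝ) (hσ : 0 < σ)
    (hmeas : ∀ l, Measurable (N l))
    (hindep : iIndepFun N P)
    (hdist : ∀ l, Measure.map (N l) P = gaussianReal 0 ⟨σ ^ 2, sq_nonneg σ⟩)
    (i : Fin n) (t : ℝ) (ht : 0 < t) :
    (P {ω | (n : ℝ) * t ≤ ∑ l, |N i ω - N l ω|}).toReal ≤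
      2 ^ n * Real.exp (-(n : ℝ) * t ^ 2 / (2 * σ ^ 2 * ((n : ℝ) - 1))) := by
  classical
  set v : ℝ≥0 := ⟨σ ^ 2, sq_nonneg σ⟩ with hv_def
  have hv : v ≠ 0 := by
    intro h
    have : σ ^ 2 = 0 := congrArg NNReal.toReal h
    nlinarith
  have hvr : (v : ℝ) = σ ^ 2 := rfl
  have hn1 : (1 : ℝ) ≤ (n : ℝ) - 1 := by
    have : (2 : ℝ) ≤ n := by exact_mod_cast hn
    linarith
  have hn1pos : (0 : ℝ) < (n : ℝ) - 1 := by linarith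
  have hσ2 : (0 : ℝ) < σ ^ 2 := by positivity
  -- coefficients
  set c : Fin n → ℝ := fun l => if l = i then (n : ℝ) - 1 else 1 with hc_def
  have hc_nonneg : ∀ l, 0 ≤ c l := by
    intro l; by_cases h : l = i <;> simp [hc_def, h] <;> linarith
  set X : Fin n → Ω → ℝ := fun l ω => c l * |N l ω| with hX_def
  have hXmeas : ∀ l, Measurable (X l) := fun l => (hmeas l).abs.const_mul (c l)
  have hXindep : iIndepFun X P :=
    hindep.comp (fun l x => c l * |x|) (fun l => measurable_abs.const_mul (c l))
  set lam : ℝ := t / (σ ^ 2 * ((n : ℝ) - 1)) with hlam_def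
  have hlam_pos : 0 < lam := by positivity
  -- pointwise domination
  have hdom : ∀ ω, ∑ l, |N i ω - N l ω| ≤ (∑ l, X l) ω := by
    intro ω
    have h1 : ∑ l, |N i ω - N l ω| = ∑ l ∈ Finset.univ.erase i, |N i ω - N l ω| := by
      rw [Finset.sum_erase_eq_sub (Finset.mem_univ i)]
      simp
    have h2 : (∑ l, X l) ω = ((n : ℝ) - 1) * |N i ω|
        + ∑ l ∈ Finset.univ.erase i, |N l ω| := by
      rw [Finset.sum_apply]
      rw [← Finset.sum_erase_add _ _ (Finset.mem_univ i)]
      have : X i ω = ((n : ℝ) - 1) * |N i ω| := by simp [hX_def, hc_def]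
      rw [this]
      have : ∑ l ∈ Finset.univ.erase i, X l ω = ∑ l ∈ Finset.univ.erase i, |N l ω| := by
        refine Finset.sum_congr rfl fun l hl => ?_
        have hli : l ≠ i := Finset.ne_of_mem_erase hl
        simp [hX_def, hc_def, hli]
      rw [this]; ring
    rw [h1, h2]
    have hcard : (Finset.univ.erase i).card = n - 1 := by
      rw [Finset.card_erase_of_mem (Finset.mem_univ i), Finset.card_univ, Fintype.card_fin]
    calc ∑ l ∈ Finset.univ.erase i, |N i ω - N l ω|
        ≤ ∑ l ∈ Finset.univ.erase i, (|N i ω| + |N l ω|) :=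
          Finset.sum_le_sum fun l _ => abs_sub (N i ω) (N l ω)
      _ = ((n : ℝ) - 1) * |N i ω| + ∑ l ∈ Finset.univ.erase i, |N l ω| := by
          rw [Finset.sum_add_distrib, Finset.sum_const, hcard, nsmul_eq_mul]
          congr 2
          have h1n : (1 : ℕ) ≤ n := by omega
          rw [Nat.cast_sub h1n]
          push_cast
          ring
  -- integrability of exp(lam * X l)
  have hint : ∀ l, Integrable (fun ω => Real.exp (lam * X l ω)) P := by
    intro l
    have : (fun ω => Real.exp (lam * X l ω))
        = fun ω => Real.exp ((lam * c l) * |N l ω|) := by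
      funext ω; rw [mul_assoc]
    rw [this]
    exact integrable_exp_abs_of_gauss hv (hmeas l) (hdist l) (lam * c l)
  -- Chernoff
  have hsub : {ω | (n : ℝ) * t ≤ ∑ l, |N i ω - N l ω|}
      ⊆ {ω | (n : ℝ) * t ≤ (∑ l, X l) ω} := fun ω hω => le_trans hω (hdom ω)
  have hmono : (P {ω | (n : ℝ) * t ≤ ∑ l, |N i ω - N l ω|}).toReal
      ≤ (P {ω | (n : ℝ) * t ≤ (∑ l, X l) ω}).toReal :=
    ENNReal.toReal_mono (measure_ne_top _ _) (measure_mono hsub)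
  have hintY : Integrable (fun ω => Real.exp (lam * (∑ l, X l) ω)) P :=
    hXindep.integrable_exp_mul_sum hXmeas (fun l _ => hint l)
  have hchernoff := ProbabilityTheory.measure_ge_le_exp_mul_mgf (X := ∑ l, X l) (μ := P)
    ((n : ℝ) * t) hlam_pos.le hintY
  -- mgf bound
  have hmgf_sum : mgf (∑ l, X l) P lam = ∏ l, mgf (X l) P lam :=
    hXindep.mgf_sum hXmeas Finset.univ
  have hmgf_bound : ∀ l, mgf (X l) P lam ≤ 2 * Real.exp ((lam * c l) ^ 2 * (σ ^ 2) / 2) := by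
    intro l
    have heq : mgf (X l) P lam = ∫ ω, Real.exp ((lam * c l) * |N l ω|) ∂P := by
      unfold mgf
      congr 1; funext ω; rw [mul_assoc]
    rw [heq]
    have := integral_exp_abs_of_gauss (P := P) hv (hmeas l) (hdist l) (lam * c l)
    rwa [hvr] at this
  have hprod : (∏ l, mgf (X l) P lam)
      ≤ ∏ l, (2 * Real.exp ((lam * c l) ^ 2 * (σ ^ 2) / 2)) := by
    refine Finset.prod_le_prod (fun l _ => ProbabilityTheory.mgf_nonneg) fun l _ => hmgf_bound l
  have hprod_eq : (∏ l : Fin n, (2 * Real.exp ((lam * c l) ^ 2 * (σ ^ 2) / 2)))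
      = 2 ^ n * Real.exp (lam ^ 2 * σ ^ 2 * (n : ℝ) * ((n : ℝ) - 1) / 2) := by
    rw [Finset.prod_mul_distrib, Finset.prod_const, Finset.card_univ, Fintype.card_fin,
      ← Real.exp_sum]
    congr 1
    have hsum : ∑ l : Fin n, (lam * c l) ^ 2 * σ ^ 2 / 2
        = (∑ l : Fin n, c l ^ 2) * (lam ^ 2 * σ ^ 2 / 2) := by
      rw [Finset.sum_mul]
      refine Finset.sum_congr rfl fun l _ => by ring
    rw [hsum]
    have hcsum : ∑ l : Fin n, c l ^ 2 = ((n : ℝ) - 1) ^ 2 + ((n : ℝ) - 1) := by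
      rw [← Finset.sum_erase_add _ _ (Finset.mem_univ i)]
      have h1 : c i ^ 2 = ((n : ℝ) - 1) ^ 2 := by simp [hc_def]
      have h2 : ∑ l ∈ Finset.univ.erase i, c l ^ 2 = ((n : ℝ) - 1) := by
        have : ∀ l ∈ Finset.univ.erase i, c l ^ 2 = 1 := by
          intro l hl
          have hli : l ≠ i := Finset.ne_of_mem_erase hl
          simp [hc_def, hli]
        rw [Finset.sum_congr rfl this, Finset.sum_const,
          Finset.card_erase_of_mem (Finset.mem_univ i), Finset.card_univ, Fintype.card_fin]
        have h1n : (1 : ℕ) ≤ n := by omega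
        rw [nsmul_eq_mul, Nat.cast_sub h1n]
        push_cast
        ring
      rw [h1, h2]
      ring
    rw [hcsum]
    ring
  -- assemble
  have hfinal : Real.exp (-lam * ((n : ℝ) * t)) *
      (2 ^ n * Real.exp (lam ^ 2 * σ ^ 2 * (n : ℝ) * ((n : ℝ) - 1) / 2))
      = 2 ^ n * Real.exp (-(n : ℝ) * t ^ 2 / (2 * σ ^ 2 * ((n : ℝ) - 1))) := by
    rw [mul_left_comm, ← Real.exp_add]
    congr 2
    rw [hlam_def]
    field_simp
    ring
  calc (P {ω | (n : ℝ) * t ≤ ∑ l, |N i ω - N l ω|}).toReal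
      ≤ (P {ω | (n : ℝ) * t ≤ (∑ l, X l) ω}).toReal := hmono
    _ ≤ Real.exp (-lam * ((n : ℝ) * t)) * mgf (∑ l, X l) P lam := hchernoff
    _ ≤ Real.exp (-lam * ((n : ℝ) * t)) *
        (2 ^ n * Real.exp (lam ^ 2 * σ ^ 2 * (n : ℝ) * ((n : ℝ) - 1) / 2)) := by
        rw [hmgf_sum]
        refine mul_le_mul_of_nonneg_left ?_ (Real.exp_pos _).le
        rw [← hprod_eq]
        exact hprod
    _ = 2 ^ n * Real.exp (-(n : ℝ) * t ^ 2 / (2 * σ ^ 2 * ((n : ℝ) - 1))) := hfinal
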